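/- Suppose that for each player i = 1, …, n the formula φ_i ∈ L²_{i+} is satisfiable in an L²-measurable probability structure appropriate for Γ. Then the conjunction φ_1 ∧ ⋯ ∧ φ_n is satisfiable in an L²-measurable probability structure appropriate for Γ. -/

import Mathlib

open scoped BigOperators

noncomputable section

/-- A probability distribution on a finite type, represented as a weight function. -/
def IsDist {α : Type*} [Fintype α] (p : α → ℝ) : Prop :=
  (∀ a, 0 ≤ p a) ∧ ∑ a, p a = 1

/-- The probability of a set under a weight function. -/
def probOf {α : Type*} [Fintype α] (p : α → ℝ) (E : Set α) : ℝ :=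
  ∑ a, E.indicator p a

/-- A finite normal-form game with `n` players, all utilities in `[0,1]`. -/
structure Game (n : ℕ) where
  S : Fin n → Type
  fintypeS : ∀ i, Fintype (S i)
  decEqS : ∀ i, DecidableEq (S i)
  nonemptyS : ∀ i, Nonempty (S i)
  u : (i : Fin n) → ((j : Fin n) → S j) → ℝ
  u_mem : ∀ i σ, u i σ ∈ Set.Icc (0 : ℝ) 1

attribute [instance] Game.fintypeS Game.decEqS Game.nonemptyS

namespace Game

variable {n : ℕ}

abbrev Prof (G : Game n) : Type := (j : Fin n) → G.S j

abbrev OppProf (G : Game n) (i : Fin n) : Type := (j : {j : Fin n // j ≠ i}) → G.S j.val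

def stratOpp (G : Game n) (i : Fin n) (σ : G.Prof) : G.OppProf i := fun j => σ j.val

def combine (G : Game n) (i : Fin n) (s : G.S i) (τ : G.OppProf i) : G.Prof :=
  fun j => if h : j = i then cast (congrArg G.S h.symm) s else τ ⟨j, h⟩

/-- Expected utility of strategy `s` of player `i` under belief `b` on opponents' profiles. -/
def EU (G : Game n) (i : Fin n) (s : G.S i) (b : G.OppProf i → ℝ) : ℝ :=
  ∑ τ : G.OppProf i, b τ * G.u i (G.combine i s τ)

/-- `s` is a best response to the belief `b`. -/
def BR (G : Game n) (i : Fin n) (s : G.S i) (b : G.OppProf i → ℝ) : Prop :=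
  ∀ s' : G.S i, G.EU i s' b ≤ G.EU i s b

/-- Utility of mixed strategy `m` of player `i` against opponents' profile `τ`. -/
def EUmix (G : Game n) (i : Fin n) (m : G.S i → ℝ) (τ : G.OppProf i) : ℝ :=
  ∑ s : G.S i, m s * G.u i (G.combine i s τ)

/-- `s` is weakly dominated by the mixed strategy `m` with respect to `T`. -/
def WDom (G : Game n) (i : Fin n) (m : G.S i → ℝ) (s : G.S i)
    (T : Set (G.OppProf i)) : Prop :=
  (∀ τ ∈ T, G.u i (G.combine i s τ) ≤ G.EUmix i m τ) ∧
    ∃ τ ∈ T, G.u i (G.combine i s τ) < G.EUmix i m τ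

/-- `s` is strongly dominated by the mixed strategy `m` with respect to `T`. -/
def SDom (G : Game n) (i : Fin n) (m : G.S i → ℝ) (s : G.S i)
    (T : Set (G.OppProf i)) : Prop :=
  ∀ τ ∈ T, G.u i (G.combine i s τ) < G.EUmix i m τ

/-- Strategies of player `i` surviving `k` rounds of iterated deletion of weakly
dominated strategies. -/
def NWD (G : Game n) : ℕ → (i : Fin n) → Set (G.S i)
  | 0 => fun _ => Set.univ
  | k + 1 => fun i =>
      {s | s ∈ NWD G k i ∧
        ¬∃ m : G.S i → ℝ, IsDist m ∧
          G.WDom i m s {τ : G.OppProf i | ∀ j, τ j ∈ NWD G k j.val}}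

/-- Strategies of player `i` surviving `k` rounds of iterated deletion of strongly
dominated strategies. -/
def NSD (G : Game n) : ℕ → (i : Fin n) → Set (G.S i)
  | 0 => fun _ => Set.univ
  | k + 1 => fun i =>
      {s | s ∈ NSD G k i ∧
        ¬∃ m : G.S i → ℝ, IsDist m ∧
          G.SDom i m s {τ : G.OppProf i | ∀ j, τ j ∈ NSD G k j.val}}

end Game

open MeasureTheory in
/-- A probability structure appropriate for the game `G`. -/
structure PStruct {n : ℕ} (G : Game n) where
  Ω : Type
  meas : MeasurableSpace Ω
  strat : Ω → G.Prof
  PR : Fin n → Ω → @Measure Ω meas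
  PR_prob : ∀ i ω, @IsProbabilityMeasure Ω meas (PR i ω)
  strat_meas : ∀ (j : Fin n) (s : G.S j), MeasurableSet[meas] {ω | strat ω j = s}
  PR_own_strat : ∀ i ω, PR i ω {ω' | strat ω' i = strat ω i} = 1
  PR_meas : ∀ (i : Fin n) (π : @Measure Ω meas), MeasurableSet[meas] {ω | PR i ω = π}
  PR_own_PR : ∀ i ω, PR i ω {ω' | PR i ω' = PR i ω} = 1

namespace PStruct

variable {n : ℕ} {G : Game n}

/-- The belief on opponents' strategy profiles induced by `PR i ω`. -/
def belief (M : PStruct G) (i : Fin n) (ω : M.Ω) : G.OppProf i → ℝ :=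
  fun τ => (M.PR i ω {ω' | G.stratOpp i (M.strat ω') = τ}).toReal

/-- `(M,ω) ⊨ RAT_i`. -/
def RATi (M : PStruct G) (i : Fin n) (ω : M.Ω) : Prop :=
  G.BR i (M.strat ω i) (M.belief i ω)

/-- `(M,ω) ⊨ B_i E`. -/
def Bel (M : PStruct G) (i : Fin n) (ω : M.Ω) (E : Set M.Ω) : Prop :=
  ∃ F, @MeasurableSet M.Ω M.meas F ∧ F ⊆ E ∧ M.PR i ω F = 1

/-- `(M,ω) ⊨ ⟨B_i⟩ E`. -/
def BelPos (M : PStruct G) (i : Fin n) (ω : M.Ω) (E : Set M.Ω) : Prop :=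
  ∃ F, @MeasurableSet M.Ω M.meas F ∧ F ⊆ E ∧ 0 < M.PR i ω F

end PStruct

/-- The events `RATzero^k_i(M)`, defined simultaneously for all appropriate structures. -/
def RATzero {n : ℕ} (G : Game n) : (k : ℕ) → (M : PStruct G) → Fin n → Set M.Ω
  | 0, _, _ => Set.univ
  | k + 1, M, i =>
      {ω | M.RATi i ω ∧
        M.Bel i ω {ω' | ∃ M' : PStruct G, ∃ ω'' : M'.Ω,
          M'.strat ω'' i = M.strat ω' i ∧ ω'' ∈ RATzero G k M' i} ∧
        M.Bel i ω {ω' | ∀ j, j ≠ i → ω' ∈ RATzero G k M j} ∧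
        ∀ j, j ≠ i → ∀ s : G.S j,
          (∃ M' : PStruct G, ∃ ω' : M'.Ω, M'.strat ω' j = s ∧
              ∀ j', j' ≠ i → ω' ∈ RATzero G k M' j') →
            M.BelPos i ω {ω'' | M.strat ω'' j = s}}

/-- The events `RAT^k_i(M)`. -/
def RATk {n : ℕ} (G : Game n) (M : PStruct G) : (k : ℕ) → Fin n → Set M.Ω
  | 0, _ => Set.univ
  | k + 1, i => {ω | M.RATi i ω ∧ M.Bel i ω {ω' | ∀ j, j ≠ i → ω' ∈ RATk G M k j}}

/-- The event that every player is rational. -/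
def RATall {n : ℕ} {G : Game n} (M : PStruct G) : Set M.Ω := {ω | ∀ j, M.RATi j ω}

/-- The "everyone believes" operator iterated `k` times. -/
def Ek {n : ℕ} {G : Game n} (M : PStruct G) : ℕ → Set M.Ω → Set M.Ω
  | 0, X => X
  | k + 1, X => {ω | ∀ j, M.Bel j ω (Ek M k X)}

/-- `σ` is a rationalizable strategy for player `i`. -/
def Rationalizable {n : ℕ} (G : Game n) (i : Fin n) (σ : G.S i) : Prop :=
  ∃ Z : (j : Fin n) → Set (G.S j),
    σ ∈ Z i ∧
    ∀ j, ∀ σ' ∈ Z j, ∃ μ : G.OppProf j → ℝ, IsDist μ ∧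
      (∀ τ, 0 < μ τ → ∀ j', τ j' ∈ Z j'.val) ∧ G.BR j σ' μ

/-- `σ` is rationalizable′ for player `i`. -/
def Rationalizable' {n : ℕ} (G : Game n) (i : Fin n) (σ : G.S i) : Prop :=
  ∃ X : ℕ → (j : Fin n) → Set (G.S j),
    (∀ j, X 0 j = Set.univ) ∧
    (∀ (k : ℕ) (j : Fin n), ∀ σ' ∈ X (k + 1) j, ∃ μ : G.OppProf j → ℝ, IsDist μ ∧
      (∀ τ, 0 < μ τ → ∀ j', τ j' ∈ X k j'.val) ∧ G.BR j σ' μ) ∧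
    ∀ k, σ ∈ X k i

end
noncomputable section

/-- The language `L²`: formulas built from `true`, `RAT_j`, `play_j(σ_j)` by negation,
conjunction, and the operators `pr_j(φ) ≥ α`, `pr_j(φ) > α` for rational `α ∈ [0,1]`. -/
inductive L2 {n : ℕ} (G : Game n) : Type where
  | tru : L2 G
  | rat : Fin n → L2 G
  | play : (j : Fin n) → G.S j → L2 G
  | neg : L2 G → L2 G
  | conj : L2 G → L2 G → L2 G
  | prGe : Fin n → L2 G → (α : ℚ) → 0 ≤ α → α ≤ 1 → L2 G
  | prGt : Fin n → L2 G → (α : ℚ) → 0 ≤ α → α ≤ 1 → L2 G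

/-- The set of states of `M` at which an `L²` formula holds. -/
def Sat {n : ℕ} {G : Game n} (M : PStruct G) : L2 G → Set M.Ω
  | .tru => Set.univ
  | .rat j => {ω | M.RATi j ω}
  | .play j s => {ω | M.strat ω j = s}
  | .neg φ => (Sat M φ)ᶜ
  | .conj φ ψ => Sat M φ ∩ Sat M ψ
  | .prGe j φ α _ _ => {ω | ENNReal.ofReal (α : ℝ) ≤ M.PR j ω (Sat M φ)}
  | .prGt j φ α _ _ => {ω | ENNReal.ofReal (α : ℝ) < M.PR j ω (Sat M φ)}

/-- `M` is `L²`-measurable: every `L²`-definable event is measurable. -/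
def L2Meas {n : ℕ} {G : Game n} (M : PStruct G) : Prop :=
  ∀ φ : L2 G, @MeasurableSet M.Ω M.meas (Sat M φ)

/-- Membership in `L²_{j+}`. -/
def InL2jp {n : ℕ} {G : Game n} (j : Fin n) : L2 G → Prop
  | .tru => True
  | .rat j' => j' = j
  | .play j' _ => j' = j
  | .prGe j' _ _ _ _ => j' = j
  | .prGt j' _ _ _ _ => j' = j
  | _ => False

/-- The events `RAT3^k_i(M)`, defined simultaneously for all (`L²`-measurable)
appropriate structures. -/
def RAT3 {n : ℕ} (G : Game n) : (k : ℕ) → (M : PStruct G) → Fin n → Set M.Ω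
  | 0, _, _ => Set.univ
  | k + 1, M, i =>
      {ω | M.RATi i ω ∧
        M.Bel i ω {ω' | ∃ M' : PStruct G, L2Meas M' ∧ ∃ ω'' : M'.Ω,
          M'.strat ω'' i = M.strat ω' i ∧ ω'' ∈ RAT3 G k M' i} ∧
        M.Bel i ω {ω' | ∀ j, j ≠ i → ω' ∈ RAT3 G k M j} ∧
        ∀ ψ : L2 G, (∃ j, j ≠ i ∧ InL2jp j ψ) →
          (∃ M' : PStruct G, L2Meas M' ∧ ∃ ω' : M'.Ω,
              ω' ∈ Sat M' ψ ∧ ∀ j, j ≠ i → ω' ∈ RAT3 G k M' j) →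
            M.BelPos i ω (Sat M ψ)}

end

noncomputable section Glue

open MeasureTheory Set

namespace L2Glue

variable {n : ℕ} {G : Game n} (M : Fin n → PStruct G)

local instance (i : Fin n) : MeasurableSpace (M i).Ω := (M i).meas

/-- The glued state space: disjoint union of the component state spaces plus one
extra state. -/
abbrev BigΩ : Type := (Σ i : Fin n, (M i).Ω) ⊕ Unit

/-- Inclusion of the `i`-th component. -/
def ι (i : Fin n) : (M i).Ω → BigΩ M := fun x => Sum.inl ⟨i, x⟩

lemma ι_injective (i : Fin n) : Function.Injective (ι M i) := fun x y h => by
  have h2 := Sum.inl_injective h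
  simpa using h2

lemma measurable_ι (i : Fin n) : Measurable (ι M i) :=
  measurable_inl.comp (Measurable.of_le_map (iInf_le _ i))

lemma measurableSet_iff (S : Set (BigΩ M)) :
    MeasurableSet S ↔ ∀ i, MeasurableSet (ι M i ⁻¹' S) := by
  rw [measurableSet_sum_iff]
  constructor
  · intro h i
    exact MeasurableSpace.measurableSet_iInf.mp h.1 i
  · intro h
    refine ⟨MeasurableSpace.measurableSet_iInf.mpr h, trivial⟩

lemma measurableSet_image (i : Fin n) {B : Set (M i).Ω} (hB : MeasurableSet B) :
    MeasurableSet (ι M i '' B) := by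
  rw [measurableSet_iff]
  intro k
  by_cases h : k = i
  · subst h
    rw [(ι_injective M k).preimage_image]
    exact hB
  · have : ι M k ⁻¹' (ι M i '' B) = ∅ := by
      ext x
      simp only [mem_preimage, mem_image, mem_empty_iff_false, iff_false]
      rintro ⟨b, _, hb⟩
      have := Sum.inl_injective hb
      exact h (congrArg Sigma.fst this).symm
    rw [this]
    exact MeasurableSet.empty

lemma map_ι_injective (i : Fin n) :
    Function.Injective (fun μ : Measure (M i).Ω => μ.map (ι M i)) := by
  intro μ ν h
  ext B hB
  have h2 := congrArg (fun m : Measure (BigΩ M) => m (ι M i '' B)) h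
  simpa [Measure.map_apply (measurable_ι M i) (measurableSet_image M i hB),
    (ι_injective M i).preimage_image] using h2

variable (w : ∀ i, (M i).Ω)

/-- The strategy map on the glued space. -/
def bigStrat : BigΩ M → G.Prof
  | Sum.inl ⟨i, x⟩ => (M i).strat x
  | Sum.inr _ => fun j => (M j).strat (w j) j

/-- The probability assignments on the glued space. -/
def bigPR (j : Fin n) : BigΩ M → Measure (BigΩ M)
  | Sum.inl ⟨i, x⟩ => ((M i).PR j x).map (ι M i)
  | Sum.inr _ => ((M j).PR j (w j)).map (ι M j)

lemma bigStrat_meas (j : Fin n) (s : G.S j) :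
    MeasurableSet {ω : BigΩ M | bigStrat M w ω j = s} := by
  rw [measurableSet_iff]
  intro i
  exact (M i).strat_meas j s

/-- The glued probability structure. -/
def bigM : PStruct G where
  Ω := BigΩ M
  meas := inferInstance
  strat := bigStrat M w
  PR := bigPR M w
  PR_prob := by
    rintro i (⟨k, x⟩ | u)
    · haveI := (M k).PR_prob i x
      exact Measure.isProbabilityMeasure_map (measurable_ι M k).aemeasurable
    · haveI := (M i).PR_prob i (w i)
      exact Measure.isProbabilityMeasure_map (measurable_ι M i).aemeasurable
  strat_meas := bigStrat_meas M w
  PR_own_strat := by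
    rintro i (⟨k, x⟩ | u)
    · show ((M k).PR i x).map (ι M k)
        {ω' : BigΩ M | bigStrat M w ω' i = (M k).strat x i} = 1
      rw [Measure.map_apply (measurable_ι M k) (bigStrat_meas M w i _)]
      exact (M k).PR_own_strat i x
    · show ((M i).PR i (w i)).map (ι M i)
        {ω' : BigΩ M | bigStrat M w ω' i = (M i).strat (w i) i} = 1
      rw [Measure.map_apply (measurable_ι M i) (bigStrat_meas M w i _)]
      exact (M i).PR_own_strat i (w i)
  PR_meas := by
    intro i π
    rw [measurableSet_iff]
    intro k
    have hpre : ι M k ⁻¹' {ω : BigΩ M | bigPR M w i ω = π} =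
        {x : (M k).Ω | ((M k).PR i x).map (ι M k) = π} := rfl
    rw [hpre]
    by_cases h : ∃ x₀ : (M k).Ω, ((M k).PR i x₀).map (ι M k) = π
    · obtain ⟨x₀, hx₀⟩ := h
      have : {x : (M k).Ω | ((M k).PR i x).map (ι M k) = π} =
          {x : (M k).Ω | (M k).PR i x = (M k).PR i x₀} := by
        ext x
        simp only [mem_setOf_eq]
        constructor
        · intro hx
          exact map_ι_injective M k (hx.trans hx₀.symm)
        · intro hx
          rw [hx, hx₀]
      rw [this]
      exact (M k).PR_meas i _
    · have : {x : (M k).Ω | ((M k).PR i x).map (ι M k) = π} = ∅ := by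
        ext x
        simp only [mem_setOf_eq, mem_empty_iff_false, iff_false]
        exact fun hx => h ⟨x, hx⟩
      rw [this]
      exact MeasurableSet.empty
  PR_own_PR := by
    rintro i (⟨k, x⟩ | u)
    · haveI := (M k).PR_prob i x
      haveI : IsProbabilityMeasure (((M k).PR i x).map (ι M k)) :=
        Measure.isProbabilityMeasure_map (measurable_ι M k).aemeasurable
      show ((M k).PR i x).map (ι M k)
        {ω' : BigΩ M | bigPR M w i ω' = ((M k).PR i x).map (ι M k)} = 1
      refine le_antisymm prob_le_one ?_
      have hsub : {x' : (M k).Ω | (M k).PR i x' = (M k).PR i x} ⊆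
          ι M k ⁻¹' {ω' : BigΩ M | bigPR M w i ω' = ((M k).PR i x).map (ι M k)} := by
        intro x' hx'
        show ((M k).PR i x').map (ι M k) = ((M k).PR i x).map (ι M k)
        rw [hx']
      calc (1 : ENNReal) = (M k).PR i x {x' | (M k).PR i x' = (M k).PR i x} :=
              ((M k).PR_own_PR i x).symm
        _ ≤ (M k).PR i x (ι M k ⁻¹'
              {ω' : BigΩ M | bigPR M w i ω' = ((M k).PR i x).map (ι M k)}) :=
              measure_mono hsub
        _ ≤ ((M k).PR i x).map (ι M k)
              {ω' : BigΩ M | bigPR M w i ω' = ((M k).PR i x).map (ι M k)} :=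
              Measure.le_map_apply (measurable_ι M k).aemeasurable _
    · haveI := (M i).PR_prob i (w i)
      haveI : IsProbabilityMeasure (((M i).PR i (w i)).map (ι M i)) :=
        Measure.isProbabilityMeasure_map (measurable_ι M i).aemeasurable
      show ((M i).PR i (w i)).map (ι M i)
        {ω' : BigΩ M | bigPR M w i ω' = ((M i).PR i (w i)).map (ι M i)} = 1
      refine le_antisymm prob_le_one ?_
      have hsub : {x' : (M i).Ω | (M i).PR i x' = (M i).PR i (w i)} ⊆
          ι M i ⁻¹' {ω' : BigΩ M | bigPR M w i ω' = ((M i).PR i (w i)).map (ι M i)} := by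
        intro x' hx'
        show ((M i).PR i x').map (ι M i) = ((M i).PR i (w i)).map (ι M i)
        rw [hx']
      calc (1 : ENNReal) = (M i).PR i (w i) {x' | (M i).PR i x' = (M i).PR i (w i)} :=
              ((M i).PR_own_PR i (w i)).symm
        _ ≤ (M i).PR i (w i) (ι M i ⁻¹'
              {ω' : BigΩ M | bigPR M w i ω' = ((M i).PR i (w i)).map (ι M i)}) :=
              measure_mono hsub
        _ ≤ ((M i).PR i (w i)).map (ι M i)
              {ω' : BigΩ M | bigPR M w i ω' = ((M i).PR i (w i)).map (ι M i)} :=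
              Measure.le_map_apply (measurable_ι M i).aemeasurable _

lemma stratOpp_meas (j : Fin n) (τ : G.OppProf j) :
    MeasurableSet {ω' : BigΩ M | G.stratOpp j (bigStrat M w ω') = τ} := by
  have h : {ω' : BigΩ M | G.stratOpp j (bigStrat M w ω') = τ} =
      ⋂ j' : {j' : Fin n // j' ≠ j}, {ω' : BigΩ M | bigStrat M w ω' j'.val = τ j'} := by
    ext ω'
    constructor
    · intro hmem
      exact mem_iInter.mpr fun j' => congrFun hmem j'
    · intro hmem
      funext j'
      exact mem_iInter.mp hmem j'
  rw [h]
  exact MeasurableSet.iInter fun j' => bigStrat_meas M w j'.val (τ j')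

lemma belief_ι (j i : Fin n) (x : (M i).Ω) :
    (bigM M w).belief j (ι M i x) = (M i).belief j x := by
  funext τ
  show (((M i).PR j x).map (ι M i)
      {ω' : BigΩ M | G.stratOpp j (bigStrat M w ω') = τ}).toReal = _
  rw [Measure.map_apply (measurable_ι M i) (stratOpp_meas M w j τ)]
  rfl

lemma belief_star (i : Fin n) :
    (bigM M w).belief i (Sum.inr ()) = (M i).belief i (w i) := by
  funext τ
  show (((M i).PR i (w i)).map (ι M i)
      {ω' : BigΩ M | G.stratOpp i (bigStrat M w ω') = τ}).toReal = _
  rw [Measure.map_apply (measurable_ι M i) (stratOpp_meas M w i τ)]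
  rfl

lemma sat_ι (hL : ∀ i, L2Meas (M i)) (ψ : L2 G) :
    ∀ i, ι M i ⁻¹' Sat (bigM M w) ψ = Sat (M i) ψ := by
  induction ψ with
  | tru => intro i; rfl
  | play j s => intro i; rfl
  | rat j =>
      intro i
      ext x
      show (bigM M w).RATi j (ι M i x) ↔ (M i).RATi j x
      unfold PStruct.RATi
      rw [belief_ι]
      exact Iff.rfl
  | neg ψ' ih =>
      intro i
      show ι M i ⁻¹' (Sat (bigM M w) ψ')ᶜ = (Sat (M i) ψ')ᶜ
      exact congrArg compl (ih i)
  | conj ψ₁ ψ₂ ih₁ ih₂ =>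
      intro i
      show ι M i ⁻¹' (Sat (bigM M w) ψ₁ ∩ Sat (bigM M w) ψ₂) = _
      exact congrArg₂ (· ∩ ·) (ih₁ i) (ih₂ i)
  | prGe j ψ' α h0 h1 ih =>
      intro i
      have hmeas := (measurableSet_iff M (Sat (bigM M w) ψ')).mpr
        (fun k => by rw [ih k]; exact hL k ψ')
      ext x
      show ENNReal.ofReal (α : ℝ) ≤ ((M i).PR j x).map (ι M i) (Sat (bigM M w) ψ') ↔ _
      rw [Measure.map_apply (measurable_ι M i) hmeas, ih i]
      rfl
  | prGt j ψ' α h0 h1 ih =>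
      intro i
      have hmeas := (measurableSet_iff M (Sat (bigM M w) ψ')).mpr
        (fun k => by rw [ih k]; exact hL k ψ')
      ext x
      show ENNReal.ofReal (α : ℝ) < ((M i).PR j x).map (ι M i) (Sat (bigM M w) ψ') ↔ _
      rw [Measure.map_apply (measurable_ι M i) hmeas, ih i]
      rfl

lemma bigM_L2Meas (hL : ∀ i, L2Meas (M i)) : L2Meas (bigM M w) := by
  intro ψ
  exact (measurableSet_iff M (Sat (bigM M w) ψ)).mpr
    (fun k => by rw [sat_ι M w hL ψ k]; exact hL k ψ)

lemma sat_star (hL : ∀ i, L2Meas (M i)) (i : Fin n) (ψ : L2 G) (hinp : InL2jp i ψ)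
    (hwit : w i ∈ Sat (M i) ψ) : (Sum.inr () : BigΩ M) ∈ Sat (bigM M w) ψ := by
  cases ψ with
  | tru => exact Set.mem_univ _
  | rat j =>
      have hj : j = i := hinp
      subst hj
      show (bigM M w).RATi j (Sum.inr ())
      unfold PStruct.RATi
      rw [belief_star]
      exact hwit
  | play j s =>
      have hj : j = i := hinp
      subst hj
      exact hwit
  | neg ψ' => exact hinp.elim
  | conj ψ₁ ψ₂ => exact hinp.elim
  | prGe j ψ' α h0 h1 =>
      have hj : j = i := hinp
      subst hj
      have hmeas := (measurableSet_iff M (Sat (bigM M w) ψ')).mpr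
        (fun k => by rw [sat_ι M w hL ψ' k]; exact hL k ψ')
      show ENNReal.ofReal (α : ℝ) ≤
        ((M j).PR j (w j)).map (ι M j) (Sat (bigM M w) ψ')
      rw [Measure.map_apply (measurable_ι M j) hmeas, sat_ι M w hL ψ' j]
      exact hwit
  | prGt j ψ' α h0 h1 =>
      have hj : j = i := hinp
      subst hj
      have hmeas := (measurableSet_iff M (Sat (bigM M w) ψ')).mpr
        (fun k => by rw [sat_ι M w hL ψ' k]; exact hL k ψ')
      show ENNReal.ofReal (α : ℝ) <
        ((M j).PR j (w j)).map (ι M j) (Sat (bigM M w) ψ')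
      rw [Measure.map_apply (measurable_ι M j) hmeas, sat_ι M w hL ψ' j]
      exact hwit

end L2Glue

end Glue
/-- if for each player `i` the formula `φ i ∈ L²_{i+}` is satisfiable in an
`L²`-measurable appropriate structure, then so is the conjunction `φ 1 ∧ ⋯ ∧ φ n`. -/
theorem L2_joint_satisfiability {n : ℕ} (G : Game n) (φ : (i : Fin n) → L2 G)
    (hin : ∀ i, InL2jp i (φ i))
    (hsat : ∀ i, ∃ M : PStruct G, L2Meas M ∧ ∃ ω : M.Ω, ω ∈ Sat M (φ i)) :
    ∃ M : PStruct G, L2Meas M ∧ ∃ ω : M.Ω, ∀ i, ω ∈ Sat M (φ i) := by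
  choose M hL w hw using hsat
  exact ⟨L2Glue.bigM M w, L2Glue.bigM_L2Meas M w hL, Sum.inr (),
    fun i => L2Glue.sat_star M w hL i (φ i) (hin i) (hw i)⟩
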